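/- Let k be a field of characteristic not 2 and α, β, λ ∈ k with αβ ≠ 0, λ² ≠ αβ. Suppose there exist a, b, c, d ∈ k with bd ≠ 0 and λ = (b²α + d²β - (a-c)²)/(2bd). Then the k-algebra generated by i, j with relations i² = α, j² = β, ij + ji = 2λ is isomorphic to M₂(k). In particular, for λ = 0 this recovers: the quaternion algebra (α,β/k) splits iff the form b²α + d²β - e² is isotropic. -/

import Mathlib

open FreeAlgebra in
/-- Defining relations of the algebra `A(α,β,λ) = k⟨i,j | i² = α, j² = β, ij + ji = 2λ⟩`. -/
inductive GenRel (k : Type*) [Field k] (α β lam : k) :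
    FreeAlgebra k Bool → FreeAlgebra k Bool → Prop
  | isq : GenRel k α β lam (ι k true * ι k true) (algebraMap k _ α)
  | jsq : GenRel k α β lam (ι k false * ι k false) (algebraMap k _ β)
  | anticomm : GenRel k α β lam (ι k true * ι k false + ι k false * ι k true)
      (algebraMap k _ (2 * lam))

/-- The algebra `A(α,β,λ)` given by generators `i, j` and relations
`i² = α`, `j² = β`, `ij + ji = 2λ`. -/
abbrev GenAlg (k : Type*) [Field k] (α β lam : k) := RingQuot (GenRel k α β lam)

open Module FreeAlgebra

/-- If `λ² ≠ αβ ≠ 0` and there are `a, b, c, d ∈ k` with `bd ≠ 0` and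
`λ = (b²α + d²β - (a-c)²)/(2bd)`, then `A(α,β,λ) ≅ M₂(k)`. -/
theorem genAlg_split {k : Type*} [Field k] (hchar : (2 : k) ≠ 0)
    (α β lam : k) (hαβ : α * β ≠ 0) (hlam : lam ^ 2 ≠ α * β)
    (h : ∃ a b c d : k, b * d ≠ 0 ∧
      lam = (b ^ 2 * α + d ^ 2 * β - (a - c) ^ 2) / (2 * b * d)) :
    Nonempty (GenAlg k α β lam ≃ₐ[k] Matrix (Fin 2) (Fin 2) k) := by
  classical
  obtain ⟨a, b, c, d, hbd, hl⟩ := h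
  have hb : b ≠ 0 := fun hb => hbd (by simp [hb])
  have hd : d ≠ 0 := fun hd => hbd (by simp [hd])
  rw [eq_div_iff (by simp [hchar, hb, hd, mul_ne_zero] : (2:k) * b * d ≠ 0)] at hl
  have hxy : ((a-c)/d) ^ 2 = α * (b/d) ^ 2 - 2 * lam * (b/d) + β := by
    field_simp
    linear_combination hl
  set x : k := (a - c) / d
  set y : k := b / d
  clear_value x y
  clear hl hbd hb hd
  -- the matrices
  set I : Matrix (Fin 2) (Fin 2) k := !![0,1;α,0] with hIdef
  set J : Matrix (Fin 2) (Fin 2) k := !![x,y;2*lam-α*y,-x] with hJdef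
  have hI2 : I * I = algebraMap k _ α := by
    rw [hIdef, Matrix.mul_fin_two]
    ext p q
    fin_cases p <;> fin_cases q <;> simp [Matrix.algebraMap_matrix_apply]
  have hJ2 : J * J = algebraMap k _ β := by
    rw [hJdef, Matrix.mul_fin_two]
    ext p q
    fin_cases p <;> fin_cases q <;> simp [Matrix.algebraMap_matrix_apply] <;>
      first | ring1 | linear_combination hxy
  have hIJJI : I * J + J * I = algebraMap k _ (2 * lam) := by
    rw [hIdef, hJdef, Matrix.mul_fin_two, Matrix.mul_fin_two]
    ext p q
    fin_cases p <;> fin_cases q <;> simp [Matrix.algebraMap_matrix_apply] <;> ring1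
  have hK : I * J = !![2*lam-α*y, -x; α*x, α*y] := by
    rw [hIdef, hJdef, Matrix.mul_fin_two]
    ext p q
    fin_cases p <;> fin_cases q <;> simp <;> ring1
  -- the algebra map
  let f : Bool → Matrix (Fin 2) (Fin 2) k := fun t => bif t then I else J
  have hrel : ∀ ⦃u v : FreeAlgebra k Bool⦄, GenRel k α β lam u v →
      FreeAlgebra.lift k f u = FreeAlgebra.lift k f v := by
    rintro u v hrel
    cases hrel with
    | isq => rw [map_mul, FreeAlgebra.lift_ι_apply, AlgHom.commutes]; simpa [f] using hI2
    | jsq => rw [map_mul, FreeAlgebra.lift_ι_apply, AlgHom.commutes]; simpa [f] using hJ2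
    | anticomm =>
        rw [map_add, map_mul, map_mul, FreeAlgebra.lift_ι_apply, FreeAlgebra.lift_ι_apply,
          AlgHom.commutes]
        simpa [f] using hIJJI
  let φ : GenAlg k α β lam →ₐ[k] Matrix (Fin 2) (Fin 2) k :=
    RingQuot.liftAlgHom k ⟨FreeAlgebra.lift k f, hrel⟩
  set i : GenAlg k α β lam := RingQuot.mkAlgHom k _ (ι k true) with hidef
  set j : GenAlg k α β lam := RingQuot.mkAlgHom k _ (ι k false) with hjdef
  have hφi : φ i = I := by
    rw [hidef]; rw [RingQuot.liftAlgHom_mkAlgHom_apply, FreeAlgebra.lift_ι_apply]; rfl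
  have hφj : φ j = J := by
    rw [hjdef]; rw [RingQuot.liftAlgHom_mkAlgHom_apply, FreeAlgebra.lift_ι_apply]; rfl
  -- relations in GenAlg
  have hii : i * i = algebraMap k _ α := by
    rw [hidef, ← map_mul, RingQuot.mkAlgHom_rel k GenRel.isq, AlgHom.commutes]
  have hjj : j * j = algebraMap k _ β := by
    rw [hjdef, ← map_mul, RingQuot.mkAlgHom_rel k GenRel.jsq, AlgHom.commutes]
  have hij : i * j + j * i = algebraMap k _ (2 * lam) := by
    rw [hidef, hjdef, ← map_mul, ← map_mul, ← map_add,
      RingQuot.mkAlgHom_rel k GenRel.anticomm, AlgHom.commutes]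
  -- spanning set of GenAlg
  set v : Fin 4 → GenAlg k α β lam := ![1, i, j, i*j] with hvdef
  set S : Submodule k (GenAlg k α β lam) := Submodule.span k (Set.range v) with hSdef
  have hm : ∀ n : Fin 4, v n ∈ S := fun n => Submodule.subset_span ⟨n, rfl⟩
  have h1S : (1 : GenAlg k α β lam) ∈ S := hm 0
  have hiS : i ∈ S := hm 1
  have hjS : j ∈ S := hm 2
  have hijS : i * j ∈ S := hm 3
  have hmul_i : ∀ s ∈ S, i * s ∈ S := by
    intro s hs
    induction hs using Submodule.span_induction with
    | mem u hu =>
      obtain ⟨n, rfl⟩ := hu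
      fin_cases n
      · simpa [hvdef] using hiS
      · show i * i ∈ S
        rw [hii, Algebra.algebraMap_eq_smul_one]
        exact S.smul_mem _ h1S
      · exact hijS
      · show i * (i * j) ∈ S
        rw [← mul_assoc, hii, Algebra.algebraMap_eq_smul_one, smul_mul_assoc, one_mul]
        exact S.smul_mem _ hjS
    | zero => simpa using S.zero_mem
    | add u w _ _ hu hw => rw [mul_add]; exact S.add_mem hu hw
    | smul c u _ hu => rw [mul_smul_comm]; exact S.smul_mem _ hu
  have hmul_j : ∀ s ∈ S, j * s ∈ S := by
    have hji : j * i = (2*lam) • (1 : GenAlg k α β lam) - i * j := by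
      rw [eq_sub_iff_add_eq, ← Algebra.algebraMap_eq_smul_one, add_comm, hij]
    intro s hs
    induction hs using Submodule.span_induction with
    | mem u hu =>
      obtain ⟨n, rfl⟩ := hu
      fin_cases n
      · simpa [hvdef] using hjS
      · show j * i ∈ S
        rw [hji]
        exact S.sub_mem (S.smul_mem _ h1S) hijS
      · show j * j ∈ S
        rw [hjj, Algebra.algebraMap_eq_smul_one]
        exact S.smul_mem _ h1S
      · show j * (i * j) ∈ S
        rw [← mul_assoc, hji, sub_mul, smul_mul_assoc, one_mul, mul_assoc, hjj,
          Algebra.algebraMap_eq_smul_one, mul_smul_comm, mul_one]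
        exact S.sub_mem (S.smul_mem _ hjS) (S.smul_mem _ hiS)
    | zero => simpa using S.zero_mem
    | add u w _ _ hu hw => rw [mul_add]; exact S.add_mem hu hw
    | smul c u _ hu => rw [mul_smul_comm]; exact S.smul_mem _ hu
  have hspan : S = ⊤ := by
    rw [eq_top_iff]
    intro g _
    obtain ⟨w, rfl⟩ := RingQuot.mkAlgHom_surjective k (GenRel k α β lam) g
    have key : ∀ w : FreeAlgebra k Bool, ∀ s ∈ S,
        RingQuot.mkAlgHom k (GenRel k α β lam) w * s ∈ S := by
      intro w
      induction w using FreeAlgebra.induction with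
      | grade0 r =>
        intro s hs
        rw [AlgHom.commutes, Algebra.algebraMap_eq_smul_one, smul_mul_assoc, one_mul]
        exact S.smul_mem _ hs
      | grade1 t => cases t <;> [exact hmul_j; exact hmul_i]
      | mul u w hu hw =>
        intro s hs
        rw [map_mul, mul_assoc]
        exact hu _ (hw s hs)
      | add u w hu hw =>
        intro s hs
        rw [map_add, add_mul]
        exact S.add_mem (hu s hs) (hw s hs)
    simpa using key w 1 h1S
  -- finite dimensionality
  haveI : Module.Finite k (GenAlg k α β lam) :=
    ⟨Submodule.fg_def.mpr ⟨Set.range v, Set.finite_range v, hspan⟩⟩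
  have hfr1 : finrank k (GenAlg k α β lam) ≤ 4 := by
    simpa using finrank_le_of_span_eq_top hspan
  -- linear independence of the image family
  set w : Fin 4 → Matrix (Fin 2) (Fin 2) k := ![1, I, J, I*J] with hwdef
  have hDne : α * β - lam ^ 2 ≠ 0 := sub_ne_zero.mpr (Ne.symm hlam)
  have hli : LinearIndependent k w := by
    rw [Fintype.linearIndependent_iff]
    intro g hg
    rw [Fin.sum_univ_four] at hg
    simp only [hwdef, hK, hIdef, hJdef, Matrix.cons_val_zero, Matrix.cons_val_one,
      Matrix.head_cons, Matrix.cons_val_two, Matrix.cons_val_three, Matrix.tail_cons] at hg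
    have e00 := congrFun (congrFun hg 0) 0
    have e01 := congrFun (congrFun hg 0) 1
    have e10 := congrFun (congrFun hg 1) 0
    have e11 := congrFun (congrFun hg 1) 1
    simp [Matrix.one_apply] at e00 e01 e10 e11
    have h4ne : (α * β - lam ^ 2) * 4 ≠ 0 :=
      mul_ne_zero hDne (by
        have : (4:k) = 2 * 2 := by norm_num
        rw [this]; exact mul_ne_zero hchar hchar)
    have h2 : g 2 = 0 := by
      have hz : g 2 * ((α * β - lam ^ 2) * 4) = 0 := by
        linear_combination (2*α*x) * e00 - (2*α*x) * e11 - (2*(lam - α*y)) * e10 +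
          (2*α*(lam - α*y)) * e01 - (g 2 * α * 4) * hxy
      exact (mul_eq_zero.mp hz).resolve_right h4ne
    have h3 : g 3 = 0 := by
      have hz : g 3 * ((α * β - lam ^ 2) * 4) = 0 := by
        linear_combination (2*x) * e10 - (2*α*x) * e01 - (2*(lam - α*y)) * e00 +
          (2*(lam - α*y)) * e11 - (g 3 * α * 4) * hxy
      exact (mul_eq_zero.mp hz).resolve_right h4ne
    have h0 : g 0 = 0 := by rw [h2, h3] at e00; simpa using e00
    have h1 : g 1 = 0 := by rw [h2, h3] at e01; simpa using e01
    intro n; fin_cases n <;> assumption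
  have hfm : finrank k (Matrix (Fin 2) (Fin 2) k) = 4 := by
    rw [Module.finrank_matrix]; simp
  have hwspan : Submodule.span k (Set.range w) = ⊤ :=
    hli.span_eq_top_of_card_eq_finrank (by simp [hfm])
  -- surjectivity
  have hφw : ∀ n : Fin 4, w n ∈ LinearMap.range φ.toLinearMap := by
    intro n
    fin_cases n
    · exact LinearMap.mem_range.mpr ⟨1, show φ 1 = _ by rw [map_one]; rfl⟩
    · exact LinearMap.mem_range.mpr ⟨i, show φ i = _ by rw [hφi]; rfl⟩
    · exact LinearMap.mem_range.mpr ⟨j, show φ j = _ by rw [hφj]; rfl⟩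
    · exact LinearMap.mem_range.mpr ⟨i * j, show φ (i*j) = _ by rw [map_mul, hφi, hφj]; rfl⟩
  have hrange : LinearMap.range φ.toLinearMap = ⊤ := by
    rw [eq_top_iff, ← hwspan, Submodule.span_le]
    rintro _ ⟨n, rfl⟩
    exact hφw n
  have hsurjL : Function.Surjective φ.toLinearMap := LinearMap.range_eq_top.mp hrange
  have hfr2 : (4 : ℕ) ≤ finrank k (GenAlg k α β lam) := by
    have hle := LinearMap.finrank_range_le φ.toLinearMap
    rw [hrange, finrank_top, hfm] at hle
    exact hle
  have heq : finrank k (GenAlg k α β lam) = finrank k (Matrix (Fin 2) (Fin 2) k) := by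
    rw [hfm]; omega
  have hinjL : Function.Injective φ.toLinearMap :=
    (LinearMap.injective_iff_surjective_of_finrank_eq_finrank heq).mpr hsurjL
  exact ⟨AlgEquiv.ofBijective φ ⟨hinjL, hsurjL⟩⟩
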